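/- Let n ≥ 2. Suppose V is a real linear subspace of gl(n+1, ℝ) that is invariant under Z ↦ [[R, 0], [0, 1]] Z [[R, 0], [0, 1]]⁻¹ for every R ∈ O(n). Then V = (V ∩ 𝔪₀) ⊕ (V ∩ 𝔪₁) ⊕ (V ∩ 𝔪₂) ⊕ (V ∩ 𝔪₃), where gl(n+1, ℝ) = 𝔪₀ ⊕ 𝔪₁ ⊕ 𝔪₂ ⊕ 𝔪₃ is a direct sum decomposition. -/

import Mathlib

open Matrix

noncomputable section

abbrev Idx (n : ℕ) := Fin n ⊕ Unit

/-- 𝔪₀ = { [[λ·Iₙ,0],[0,μ]] } -/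
def m0Set (n : ℕ) : Set (Matrix (Idx n) (Idx n) ℝ) :=
  { m | ∃ l μ : ℝ,
      m = fromBlocks (l • (1 : Matrix (Fin n) (Fin n) ℝ)) 0 0
        (μ • (1 : Matrix Unit Unit ℝ)) }

/-- 𝔪₁ = 𝔨 = { [[A,0],[0,0]] : A skew-symmetric } -/
def m1Set (n : ℕ) : Set (Matrix (Idx n) (Idx n) ℝ) :=
  { m | ∃ A : Matrix (Fin n) (Fin n) ℝ, Aᵀ = -A ∧ m = fromBlocks A 0 0 0 }

/-- 𝔪₂ = { [[A,0],[0,0]] : A symmetric, trace 0 } -/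
def m2Set (n : ℕ) : Set (Matrix (Idx n) (Idx n) ℝ) :=
  { m | ∃ A : Matrix (Fin n) (Fin n) ℝ, Aᵀ = A ∧ A.trace = 0 ∧
      m = fromBlocks A 0 0 0 }

/-- 𝔪₃ = { [[0,b],[cᵀ,0]] } -/
def m3Set (n : ℕ) : Set (Matrix (Idx n) (Idx n) ℝ) :=
  { m | ∃ b c : Fin n → ℝ, m = fromBlocks 0 (replicateCol Unit b) (replicateRow Unit c) 0 }



section AuxS3
variable {n : ℕ}

private def embL (n : ℕ) : Matrix (Fin n) (Fin n) ℝ →ₗ[ℝ] Matrix (Idx n) (Idx n) ℝ where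
  toFun A := fromBlocks A 0 0 0
  map_add' A B := by simp [fromBlocks_add]
  map_smul' c A := by simp [fromBlocks_smul]

private def embD (n : ℕ) : Matrix Unit Unit ℝ →ₗ[ℝ] Matrix (Idx n) (Idx n) ℝ where
  toFun D := fromBlocks 0 0 0 D
  map_add' A B := by simp [fromBlocks_add]
  map_smul' c A := by simp [fromBlocks_smul]

private lemma embL_apply (A : Matrix (Fin n) (Fin n) ℝ) :
    embL n A = fromBlocks A 0 0 0 := rfl

private lemma embLD (A : Matrix (Fin n) (Fin n) ℝ) (D : Matrix Unit Unit ℝ) :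
    embL n A + embD n D = fromBlocks A 0 0 D := by
  show fromBlocks A 0 0 0 + fromBlocks 0 0 0 D = _
  rw [fromBlocks_add]; simp

private lemma fromBlocks_sub' {l m o p : Type*} (A A' : Matrix l m ℝ) (B B' : Matrix l p ℝ)
    (C C' : Matrix o m ℝ) (D D' : Matrix o p ℝ) :
    fromBlocks A B C D - fromBlocks A' B' C' D'
      = fromBlocks (A - A') (B - B') (C - C') (D - D') := by
  rw [sub_eq_add_neg, fromBlocks_neg, fromBlocks_add]
  simp [sub_eq_add_neg]

private lemma conjV {V : Submodule ℝ (Matrix (Idx n) (Idx n) ℝ)}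
    (hV : ∀ R : Matrix (Fin n) (Fin n) ℝ, Rᵀ * R = 1 →
      ∀ Z ∈ V, (fromBlocks R 0 0 (1 : Matrix Unit Unit ℝ)) * Z *
        (fromBlocks R 0 0 (1 : Matrix Unit Unit ℝ))⁻¹ ∈ V)
    {R : Matrix (Fin n) (Fin n) ℝ} (hR : Rᵀ * R = 1)
    {A : Matrix (Fin n) (Fin n) ℝ} {B : Matrix (Fin n) Unit ℝ}
    {C : Matrix Unit (Fin n) ℝ} {D : Matrix Unit Unit ℝ}
    (h : fromBlocks A B C D ∈ V) :
    fromBlocks (R * A * Rᵀ) (R * B) (C * Rᵀ) D ∈ V := by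
  have hinv : (fromBlocks R 0 0 (1 : Matrix Unit Unit ℝ))⁻¹ = fromBlocks Rᵀ 0 0 1 := by
    refine inv_eq_left_inv ?_
    rw [fromBlocks_multiply]
    simp [hR, fromBlocks_one]
  have h2 := hV R hR _ h
  rw [hinv, fromBlocks_multiply, fromBlocks_multiply] at h2
  simpa [Matrix.mul_assoc] using h2

private lemma sign_conj {V : Submodule ℝ (Matrix (Idx n) (Idx n) ℝ)}
    (hV : ∀ R : Matrix (Fin n) (Fin n) ℝ, Rᵀ * R = 1 →
      ∀ Z ∈ V, (fromBlocks R 0 0 (1 : Matrix Unit Unit ℝ)) * Z *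
        (fromBlocks R 0 0 (1 : Matrix Unit Unit ℝ))⁻¹ ∈ V)
    (ε : Fin n → ℝ) (hε : ∀ k, ε k * ε k = 1)
    {A : Matrix (Fin n) (Fin n) ℝ} {D : Matrix Unit Unit ℝ}
    (h : fromBlocks A 0 0 D ∈ V) :
    fromBlocks (Matrix.of fun k l => ε k * A k l * ε l) 0 0 D ∈ V := by
  have horth : (diagonal ε)ᵀ * diagonal ε = 1 := by
    rw [diagonal_transpose, diagonal_mul_diagonal,
      show (fun i => ε i * ε i) = fun _ => (1:ℝ) from funext hε, diagonal_one]
  have h2 := conjV hV horth h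
  have hAe : diagonal ε * A * (diagonal ε)ᵀ = Matrix.of (fun k l => ε k * A k l * ε l) := by
    rw [diagonal_transpose]
    ext k l
    rw [Matrix.mul_diagonal, Matrix.diagonal_mul]
    rfl
  rw [hAe] at h2
  simpa using h2

private lemma perm_conj {V : Submodule ℝ (Matrix (Idx n) (Idx n) ℝ)}
    (hV : ∀ R : Matrix (Fin n) (Fin n) ℝ, Rᵀ * R = 1 →
      ∀ Z ∈ V, (fromBlocks R 0 0 (1 : Matrix Unit Unit ℝ)) * Z *
        (fromBlocks R 0 0 (1 : Matrix Unit Unit ℝ))⁻¹ ∈ V)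
    (σ : Equiv.Perm (Fin n))
    {A : Matrix (Fin n) (Fin n) ℝ} {D : Matrix Unit Unit ℝ}
    (h : fromBlocks A 0 0 D ∈ V) :
    fromBlocks (A.submatrix σ σ) 0 0 D ∈ V := by
  set P : Matrix (Fin n) (Fin n) ℝ := σ.toPEquiv.toMatrix with hP
  have hPT : Pᵀ = σ.symm.toPEquiv.toMatrix := by
    rw [hP, ← PEquiv.toMatrix_symm, Equiv.toPEquiv_symm]
  have horth : Pᵀ * P = 1 := by
    rw [hPT, hP, ← PEquiv.toMatrix_trans, ← Equiv.toPEquiv_trans,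
      Equiv.symm_trans_self, Equiv.toPEquiv_refl, PEquiv.toMatrix_refl]
  have hconj : P * A * Pᵀ = A.submatrix σ σ := by
    rw [hP, PEquiv.toMatrix_toPEquiv_mul, hPT, PEquiv.mul_toMatrix_toPEquiv,
      Matrix.submatrix_submatrix]
    simp [Function.comp]
  have h2 := conjV hV horth h
  rw [hconj] at h2
  simpa using h2

end AuxS3
section Pairs
variable {n : ℕ}

private def pairM (A : Matrix (Fin n) (Fin n) ℝ) (i j : Fin n) : Matrix (Fin n) (Fin n) ℝ :=
  Matrix.of fun k l => if k = i ∧ l = j then A i j else if k = j ∧ l = i then A j i else 0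

private def skewM (A : Matrix (Fin n) (Fin n) ℝ) (i j : Fin n) : Matrix (Fin n) (Fin n) ℝ :=
  Matrix.of fun k l => if k = i ∧ l = j then A i j - A j i
    else if k = j ∧ l = i then A j i - A i j else 0

private def symM (A : Matrix (Fin n) (Fin n) ℝ) (i j : Fin n) : Matrix (Fin n) (Fin n) ℝ :=
  Matrix.of fun k l => if k = i ∧ l = j then A i j + A j i
    else if k = j ∧ l = i then A j i + A i j else 0

-- the two sign-averages identity
private lemma pair_avg (A : Matrix (Fin n) (Fin n) ℝ) {i j : Fin n} (hij : i ≠ j) :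
    ∀ k l, pairM A i j k l =
      (1/2 : ℝ) * (((1/2 : ℝ) * (A k l + (if k = i ∨ k = j then (-1:ℝ) else 1) * A k l *
          (if l = i ∨ l = j then (-1:ℝ) else 1)))
        - (if k = i then (-1:ℝ) else 1) *
          ((1/2 : ℝ) * (A k l + (if k = i ∨ k = j then (-1:ℝ) else 1) * A k l *
            (if l = i ∨ l = j then (-1:ℝ) else 1))) *
          (if l = i then (-1:ℝ) else 1)) := by
  intro k l
  by_cases hki : k = i <;> by_cases hkj : k = j <;> by_cases hli : l = i <;> by_cases hlj : l = j <;>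
    simp_all [pairM, hij, Ne.symm hij] <;> ring

private lemma skew_eq (A : Matrix (Fin n) (Fin n) ℝ) {i j : Fin n} (hij : i ≠ j) :
    skewM A i j = pairM A i j - (pairM A i j).submatrix (Equiv.swap i j) (Equiv.swap i j) := by
  ext k l
  simp only [skewM, pairM, Matrix.sub_apply, Matrix.submatrix_apply, Matrix.of_apply,
    Equiv.swap_apply_def]
  by_cases hki : k = i <;> by_cases hkj : k = j <;> by_cases hli : l = i <;> by_cases hlj : l = j <;>
    simp_all [hij, Ne.symm hij] <;> ring

private lemma sym_eq (A : Matrix (Fin n) (Fin n) ℝ) {i j : Fin n} (hij : i ≠ j) :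
    symM A i j = pairM A i j + (pairM A i j).submatrix (Equiv.swap i j) (Equiv.swap i j) := by
  ext k l
  simp only [symM, pairM, Matrix.add_apply, Matrix.submatrix_apply, Matrix.of_apply,
    Equiv.swap_apply_def]
  by_cases hki : k = i <;> by_cases hkj : k = j <;> by_cases hli : l = i <;> by_cases hlj : l = j <;>
    simp_all [hij, Ne.symm hij] <;> ring

private lemma skew_sum (A : Matrix (Fin n) (Fin n) ℝ) :
    ∑ p ∈ Finset.univ.offDiag, skewM A p.1 p.2 = (2:ℝ) • (A - Aᵀ) := by
  ext k l
  rw [Matrix.sum_apply]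
  by_cases hkl : k = l
  · subst hkl
    rw [Finset.sum_eq_zero]
    · simp
    · intro p hp
      have hne : p.1 ≠ p.2 := (Finset.mem_offDiag.mp hp).2.2
      simp only [skewM, Matrix.of_apply]
      split_ifs with h1 h2
      · exact absurd (h1.1.symm.trans h1.2) hne
      · exact absurd (h2.1.symm.trans h2.2) (Ne.symm hne)
      · rfl
  · have hsub : ({(k,l), (l,k)} : Finset (Fin n × Fin n)) ⊆ Finset.univ.offDiag := by
      intro p hp
      rcases Finset.mem_insert.mp hp with h | h
      · subst h; exact Finset.mem_offDiag.mpr ⟨Finset.mem_univ _, Finset.mem_univ _, hkl⟩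
      · rw [Finset.mem_singleton] at h; subst h
        exact Finset.mem_offDiag.mpr ⟨Finset.mem_univ _, Finset.mem_univ _, Ne.symm hkl⟩
    rw [← Finset.sum_subset hsub]
    · rw [Finset.sum_pair (by simp [hkl, Ne.symm hkl])]
      simp [skewM, hkl, Ne.symm hkl, Matrix.smul_apply]
      ring
    · intro p _ hp
      simp only [Finset.mem_insert, Finset.mem_singleton] at hp
      push_neg at hp
      simp only [skewM, Matrix.of_apply]
      split_ifs with h1 h2
      · exact absurd (Prod.ext h1.1.symm h1.2.symm) hp.1
      · exact absurd (Prod.ext h2.2.symm h2.1.symm) hp.2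
      · rfl

private lemma sym_sum (A : Matrix (Fin n) (Fin n) ℝ) :
    ∑ p ∈ Finset.univ.offDiag, symM A p.1 p.2
      = (2:ℝ) • (A + Aᵀ) - (4:ℝ) • Matrix.diagonal (fun k => A k k) := by
  ext k l
  rw [Matrix.sum_apply]
  by_cases hkl : k = l
  · subst hkl
    rw [Finset.sum_eq_zero]
    · simp [Matrix.diagonal_apply_eq]
      ring
    · intro p hp
      have hne : p.1 ≠ p.2 := (Finset.mem_offDiag.mp hp).2.2
      simp only [symM, Matrix.of_apply]
      split_ifs with h1 h2
      · exact absurd (h1.1.symm.trans h1.2) hne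
      · exact absurd (h2.1.symm.trans h2.2) (Ne.symm hne)
      · rfl
  · have hsub : ({(k,l), (l,k)} : Finset (Fin n × Fin n)) ⊆ Finset.univ.offDiag := by
      intro p hp
      rcases Finset.mem_insert.mp hp with h | h
      · subst h; exact Finset.mem_offDiag.mpr ⟨Finset.mem_univ _, Finset.mem_univ _, hkl⟩
      · rw [Finset.mem_singleton] at h; subst h
        exact Finset.mem_offDiag.mpr ⟨Finset.mem_univ _, Finset.mem_univ _, Ne.symm hkl⟩
    rw [← Finset.sum_subset hsub]
    · rw [Finset.sum_pair (by simp [hkl, Ne.symm hkl])]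
      simp [symM, hkl, Ne.symm hkl, Matrix.smul_apply, Matrix.diagonal_apply_ne _ hkl]
      ring
    · intro p _ hp
      simp only [Finset.mem_insert, Finset.mem_singleton] at hp
      push_neg at hp
      simp only [symM, Matrix.of_apply]
      split_ifs with h1 h2
      · exact absurd (Prod.ext h1.1.symm h1.2.symm) hp.1
      · exact absurd (Prod.ext h2.2.symm h2.1.symm) hp.2
      · rfl

private lemma diagTraceSum [NeZero n] (A : Matrix (Fin n) (Fin n) ℝ) :
    ∑ t : Fin n, (Matrix.diagonal (fun k => A k k)).submatrix (Equiv.addLeft t) (Equiv.addLeft t)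
      = A.trace • (1 : Matrix (Fin n) (Fin n) ℝ) := by
  ext k l
  rw [Matrix.sum_apply]
  by_cases hkl : k = l
  · subst hkl
    simp only [Matrix.submatrix_apply, Equiv.coe_addLeft, Matrix.diagonal_apply_eq,
      Matrix.smul_apply, Matrix.one_apply_eq, smul_eq_mul, mul_one]
    rw [Matrix.trace]
    exact Fintype.sum_equiv (Equiv.addLeft k) _ _ (fun t => by simp [Matrix.diag, add_comm])
  · rw [Finset.sum_eq_zero]
    · simp [Matrix.one_apply_ne hkl]
    · intro t _
      simp only [Matrix.submatrix_apply, Equiv.coe_addLeft]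
      exact Matrix.diagonal_apply_ne _ (by simpa using hkl)

end Pairs
section Memb
variable {n : ℕ}

private lemma pair_mem {V : Submodule ℝ (Matrix (Idx n) (Idx n) ℝ)}
    (hV : ∀ R : Matrix (Fin n) (Fin n) ℝ, Rᵀ * R = 1 →
      ∀ Z ∈ V, (fromBlocks R 0 0 (1 : Matrix Unit Unit ℝ)) * Z *
        (fromBlocks R 0 0 (1 : Matrix Unit Unit ℝ))⁻¹ ∈ V)
    {A : Matrix (Fin n) (Fin n) ℝ} {D : Matrix Unit Unit ℝ}
    (h : fromBlocks A 0 0 D ∈ V) {i j : Fin n} (hij : i ≠ j) :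
    fromBlocks (pairM A i j) 0 0 (0 : Matrix Unit Unit ℝ) ∈ V := by
  have hε1 : ∀ k, (if k = i ∨ k = j then (-1:ℝ) else 1) * (if k = i ∨ k = j then (-1:ℝ) else 1) = 1 := by
    intro k; split <;> norm_num
  have hε2 : ∀ k : Fin n, (if k = i then (-1:ℝ) else 1) * (if k = i then (-1:ℝ) else 1) = 1 := by
    intro k; split <;> norm_num
  have h1 := sign_conj hV _ hε1 h
  set A1 : Matrix (Fin n) (Fin n) ℝ := Matrix.of fun k l =>
    (1/2 : ℝ) * (A k l + (if k = i ∨ k = j then (-1:ℝ) else 1) * A k l *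
      (if l = i ∨ l = j then (-1:ℝ) else 1)) with hA1def
  have hA1 : fromBlocks A1 0 0 D ∈ V := by
    have hm := V.smul_mem ((1:ℝ)/2) (V.add_mem h h1)
    have heq : ((1:ℝ)/2) • (fromBlocks A 0 0 D +
        fromBlocks (Matrix.of fun k l => (if k = i ∨ k = j then (-1:ℝ) else 1) * A k l *
          (if l = i ∨ l = j then (-1:ℝ) else 1)) 0 0 D) = fromBlocks A1 0 0 D := by
      rw [fromBlocks_add, fromBlocks_smul]
      refine fromBlocks_inj.mpr ⟨?_, by simp, by simp, by module⟩
      ext k l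
      simp [hA1def, Matrix.smul_apply, Matrix.add_apply]
    rw [← heq]; exact hm
  have h2 := sign_conj hV _ hε2 hA1
  have hfinal : fromBlocks (pairM A i j) 0 0 (0 : Matrix Unit Unit ℝ) =
      ((1:ℝ)/2) • (fromBlocks A1 0 0 D -
        fromBlocks (Matrix.of fun k l => (if k = i then (-1:ℝ) else 1) * A1 k l *
          (if l = i then (-1:ℝ) else 1)) 0 0 D) := by
    rw [fromBlocks_sub', fromBlocks_smul]
    refine fromBlocks_inj.mpr ⟨?_, by simp, by simp, by simp⟩
    ext k l
    simp only [Matrix.smul_apply, Matrix.sub_apply, Matrix.of_apply, smul_eq_mul, hA1def]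
    exact pair_avg A hij k l
  rw [hfinal]; exact V.smul_mem _ (V.sub_mem hA1 h2)

private lemma skew_mem {V : Submodule ℝ (Matrix (Idx n) (Idx n) ℝ)}
    (hV : ∀ R : Matrix (Fin n) (Fin n) ℝ, Rᵀ * R = 1 →
      ∀ Z ∈ V, (fromBlocks R 0 0 (1 : Matrix Unit Unit ℝ)) * Z *
        (fromBlocks R 0 0 (1 : Matrix Unit Unit ℝ))⁻¹ ∈ V)
    {A : Matrix (Fin n) (Fin n) ℝ} {D : Matrix Unit Unit ℝ}
    (h : fromBlocks A 0 0 D ∈ V) {i j : Fin n} (hij : i ≠ j) :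
    embL n (skewM A i j) ∈ V := by
  have hp := pair_mem hV h hij
  have hs := perm_conj hV (Equiv.swap i j) hp
  have h3 := V.sub_mem hp hs
  rw [fromBlocks_sub'] at h3
  simp only [sub_zero, sub_self] at h3
  rw [embL_apply, skew_eq A hij]
  exact h3

private lemma sym_mem {V : Submodule ℝ (Matrix (Idx n) (Idx n) ℝ)}
    (hV : ∀ R : Matrix (Fin n) (Fin n) ℝ, Rᵀ * R = 1 →
      ∀ Z ∈ V, (fromBlocks R 0 0 (1 : Matrix Unit Unit ℝ)) * Z *
        (fromBlocks R 0 0 (1 : Matrix Unit Unit ℝ))⁻¹ ∈ V)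
    {A : Matrix (Fin n) (Fin n) ℝ} {D : Matrix Unit Unit ℝ}
    (h : fromBlocks A 0 0 D ∈ V) {i j : Fin n} (hij : i ≠ j) :
    embL n (symM A i j) ∈ V := by
  have hp := pair_mem hV h hij
  have hs := perm_conj hV (Equiv.swap i j) hp
  have h3 := V.add_mem hp hs
  rw [fromBlocks_add] at h3
  simp only [add_zero, zero_add] at h3
  rw [embL_apply, sym_eq A hij]
  exact h3

end Memb

section Uniq
variable {n : ℕ}

private lemma uniq_decomp (hn : 2 ≤ n) {W0 W1 W2 W3 Q0 Q1 Q2 Q3 : Matrix (Idx n) (Idx n) ℝ}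
    (h0 : W0 ∈ m0Set n) (h1 : W1 ∈ m1Set n) (h2 : W2 ∈ m2Set n) (h3 : W3 ∈ m3Set n)
    (k0 : Q0 ∈ m0Set n) (k1 : Q1 ∈ m1Set n) (k2 : Q2 ∈ m2Set n) (k3 : Q3 ∈ m3Set n)
    (hsum : W0 + W1 + W2 + W3 = Q0 + Q1 + Q2 + Q3) :
    W0 = Q0 ∧ W1 = Q1 ∧ W2 = Q2 ∧ W3 = Q3 := by
  obtain ⟨l, μ, rfl⟩ := h0
  obtain ⟨K, hK, rfl⟩ := h1
  obtain ⟨S, hS, hStr, rfl⟩ := h2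
  obtain ⟨b, c, rfl⟩ := h3
  obtain ⟨l', μ', rfl⟩ := k0
  obtain ⟨K', hK', rfl⟩ := k1
  obtain ⟨S', hS', hS'tr, rfl⟩ := k2
  obtain ⟨b', c', rfl⟩ := k3
  rw [fromBlocks_add, fromBlocks_add, fromBlocks_add, fromBlocks_add, fromBlocks_add,
    fromBlocks_add] at hsum
  simp only [add_zero, zero_add] at hsum
  rw [fromBlocks_inj] at hsum
  obtain ⟨e1, e2, e3, e4⟩ := hsum
  have e1T : l • (1 : Matrix (Fin n) (Fin n) ℝ) + (-K) + S = l' • 1 + (-K') + S' := by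
    have := congrArg Matrix.transpose e1
    simpa [transpose_add, transpose_smul, transpose_one, hK, hS, hK', hS'] using this
  have hKK : K = K' := by
    have h2K : (2:ℝ) • K = (2:ℝ) • K' := by
      calc (2:ℝ) • K
          = (l • (1 : Matrix (Fin n) (Fin n) ℝ) + K + S) - (l • 1 + (-K) + S) := by module
        _ = (l' • 1 + K' + S') - (l' • 1 + (-K') + S') := by rw [e1, e1T]
        _ = (2:ℝ) • K' := by module
    exact smul_right_injective _ (by norm_num : (2:ℝ) ≠ 0) h2K
  have h3' : l • (1 : Matrix (Fin n) (Fin n) ℝ) + S = l' • 1 + S' := by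
    calc l • (1 : Matrix (Fin n) (Fin n) ℝ) + S
        = (l • 1 + K + S) - K := by module
      _ = (l' • 1 + K' + S') - K := by rw [e1]
      _ = l' • 1 + S' := by rw [hKK]; module
  have hll : l = l' := by
    have htr := congrArg Matrix.trace h3'
    simp only [trace_add, trace_smul, trace_one, hStr, hS'tr, add_zero,
      Fintype.card_fin, smul_eq_mul] at htr
    have hne : ((n:ℝ)) ≠ 0 := Nat.cast_ne_zero.mpr (by omega)
    exact mul_right_cancel₀ hne htr
  have hSS : S = S' := by
    rw [hll] at h3'
    exact add_left_cancel h3'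
  exact ⟨by rw [hll, e4], by rw [hKK], by rw [hSS], by rw [e2, e3]⟩

end Uniq

theorem stmt3 (n : ℕ) (hn : 2 ≤ n)
    (V : Submodule ℝ (Matrix (Idx n) (Idx n) ℝ))
    (hV : ∀ R : Matrix (Fin n) (Fin n) ℝ, Rᵀ * R = 1 →
      ∀ Z ∈ V, (fromBlocks R 0 0 (1 : Matrix Unit Unit ℝ)) * Z *
        (fromBlocks R 0 0 (1 : Matrix Unit Unit ℝ))⁻¹ ∈ V) :
    ∀ Z : Matrix (Idx n) (Idx n) ℝ,
      Z ∈ V ↔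
      ∃ Z0 Z1 Z2 Z3 : Matrix (Idx n) (Idx n) ℝ,
        (Z0 ∈ V ∧ Z0 ∈ m0Set n) ∧ (Z1 ∈ V ∧ Z1 ∈ m1Set n) ∧
        (Z2 ∈ V ∧ Z2 ∈ m2Set n) ∧ (Z3 ∈ V ∧ Z3 ∈ m3Set n) ∧
        Z = Z0 + Z1 + Z2 + Z3 ∧
        (∀ W0 W1 W2 W3 : Matrix (Idx n) (Idx n) ℝ,
          W0 ∈ m0Set n → W1 ∈ m1Set n → W2 ∈ m2Set n → W3 ∈ m3Set n →
          Z = W0 + W1 + W2 + W3 →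
          W0 = Z0 ∧ W1 = Z1 ∧ W2 = Z2 ∧ W3 = Z3) := by
  have hn0 : ((n:ℝ)) ≠ 0 := Nat.cast_ne_zero.mpr (by omega)
  haveI : NeZero n := ⟨by omega⟩
  intro Z
  constructor
  · intro hZ
    set A := Z.toBlocks₁₁ with hA
    set Bm := Z.toBlocks₁₂ with hB
    set Cm := Z.toBlocks₂₁ with hC
    set Dm := Z.toBlocks₂₂ with hD
    have hZb : Z = fromBlocks A Bm Cm Dm := (fromBlocks_toBlocks Z).symm
    have hZV : fromBlocks A Bm Cm Dm ∈ V := by rw [← hZb]; exact hZ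
    have hneg := conjV hV (R := (-1 : Matrix (Fin n) (Fin n) ℝ)) (by simp) hZV
    have hneg' : fromBlocks A (-Bm) (-Cm) Dm ∈ V := by simpa using hneg
    have hM : fromBlocks A 0 0 Dm ∈ V := by
      have heq : fromBlocks A 0 0 Dm = ((1:ℝ)/2) •
          (fromBlocks A Bm Cm Dm + fromBlocks A (-Bm) (-Cm) Dm) := by
        rw [fromBlocks_add, fromBlocks_smul]
        exact fromBlocks_inj.mpr ⟨by module, by module, by module, by module⟩
      rw [heq]; exact V.smul_mem _ (V.add_mem hZV hneg')
    have hZ3 : fromBlocks (0 : Matrix (Fin n) (Fin n) ℝ) Bm Cm 0 ∈ V := by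
      have heq : fromBlocks (0 : Matrix (Fin n) (Fin n) ℝ) Bm Cm 0 =
          fromBlocks A Bm Cm Dm - fromBlocks A 0 0 Dm := by
        rw [fromBlocks_sub']
        exact fromBlocks_inj.mpr ⟨by module, by module, by module, by module⟩
      rw [heq]; exact V.sub_mem hZV hM
    have hskew : embL n ((2:ℝ) • (A - Aᵀ)) ∈ V := by
      rw [← skew_sum A, map_sum]
      exact V.sum_mem fun p hp => skew_mem hV hM (Finset.mem_offDiag.mp hp).2.2
    have hZ1 : embL n (((1:ℝ)/2) • (A - Aᵀ)) ∈ V := by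
      rw [show ((1:ℝ)/2) • (A - Aᵀ) = ((1:ℝ)/4) • ((2:ℝ) • (A - Aᵀ)) from by module,
        _root_.map_smul]
      exact V.smul_mem _ hskew
    have hsym : embL n ((2:ℝ) • (A + Aᵀ) - (4:ℝ) • Matrix.diagonal (fun k => A k k)) ∈ V := by
      rw [← sym_sum A, map_sum]
      exact V.sum_mem fun p hp => sym_mem hV hM (Finset.mem_offDiag.mp hp).2.2
    have hsym' : embL n (((1:ℝ)/2) • (A + Aᵀ) - Matrix.diagonal (fun k => A k k)) ∈ V := by
      rw [show ((1:ℝ)/2) • (A + Aᵀ) - Matrix.diagonal (fun k => A k k)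
        = ((1:ℝ)/4) • ((2:ℝ) • (A + Aᵀ) - (4:ℝ) • Matrix.diagonal (fun k => A k k)) from by
          module, _root_.map_smul]
      exact V.smul_mem _ hsym
    have hMdiag : fromBlocks (Matrix.diagonal (fun k => A k k)) 0 0 Dm ∈ V := by
      have heq : fromBlocks (Matrix.diagonal (fun k => A k k)) 0 0 Dm
          = fromBlocks A 0 0 Dm - embL n (((1:ℝ)/2) • (A - Aᵀ))
            - embL n (((1:ℝ)/2) • (A + Aᵀ) - Matrix.diagonal (fun k => A k k)) := by
        rw [embL_apply, embL_apply, fromBlocks_sub', fromBlocks_sub']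
        exact fromBlocks_inj.mpr ⟨by module, by module, by module, by module⟩
      rw [heq]; exact V.sub_mem (V.sub_mem hM hZ1) hsym'
    have htrsum : fromBlocks (A.trace • (1 : Matrix (Fin n) (Fin n) ℝ)) 0 0 ((n:ℝ) • Dm) ∈ V := by
      have hsum := V.sum_mem (t := Finset.univ) fun (t : Fin n) _ =>
        perm_conj hV (Equiv.addLeft t) hMdiag
      have heq : ∑ t : Fin n, fromBlocks
            ((Matrix.diagonal (fun k => A k k)).submatrix (Equiv.addLeft t) (Equiv.addLeft t))
            0 0 Dm
          = fromBlocks (A.trace • (1 : Matrix (Fin n) (Fin n) ℝ)) 0 0 ((n:ℝ) • Dm) := by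
        have h6 : ∀ t : Fin n, fromBlocks
            ((Matrix.diagonal (fun k => A k k)).submatrix (Equiv.addLeft t) (Equiv.addLeft t))
            0 0 Dm
            = embL n ((Matrix.diagonal (fun k => A k k)).submatrix (Equiv.addLeft t)
              (Equiv.addLeft t)) + embD n Dm := fun t => (embLD _ _).symm
        rw [Finset.sum_congr rfl (fun t _ => h6 t), Finset.sum_add_distrib, ← map_sum,
          diagTraceSum, Finset.sum_const, Finset.card_univ, Fintype.card_fin,
          ← Nat.cast_smul_eq_nsmul ℝ, ← _root_.map_smul, embLD]
      rw [← heq]; exact hsum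
    have hZ0 : fromBlocks ((A.trace / (n:ℝ)) • (1 : Matrix (Fin n) (Fin n) ℝ)) 0 0 Dm ∈ V := by
      have h5 := V.smul_mem ((n:ℝ))⁻¹ htrsum
      have heq : ((n:ℝ))⁻¹ • fromBlocks (A.trace • (1 : Matrix (Fin n) (Fin n) ℝ)) 0 0
            ((n:ℝ) • Dm)
          = fromBlocks ((A.trace / (n:ℝ)) • (1 : Matrix (Fin n) (Fin n) ℝ)) 0 0 Dm := by
        rw [fromBlocks_smul]
        refine fromBlocks_inj.mpr ⟨?_, by simp, by simp, ?_⟩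
        · rw [smul_smul, div_eq_inv_mul]
        · rw [smul_smul, inv_mul_cancel₀ hn0, one_smul]
      rw [← heq]; exact h5
    have hZ2 : fromBlocks (((1:ℝ)/2) • (A + Aᵀ) - (A.trace / (n:ℝ)) • 1) 0 0
        (0 : Matrix Unit Unit ℝ) ∈ V := by
      have heq : fromBlocks (((1:ℝ)/2) • (A + Aᵀ) - (A.trace / (n:ℝ)) • 1) 0 0
            (0 : Matrix Unit Unit ℝ)
          = fromBlocks A 0 0 Dm - fromBlocks ((A.trace / (n:ℝ)) • 1) 0 0 Dm
            - embL n (((1:ℝ)/2) • (A - Aᵀ)) := by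
        rw [embL_apply, fromBlocks_sub', fromBlocks_sub']
        exact fromBlocks_inj.mpr ⟨by module, by module, by module, by module⟩
      rw [heq]; exact V.sub_mem (V.sub_mem hM hZ0) hZ1
    have hm0 : fromBlocks ((A.trace / (n:ℝ)) • (1 : Matrix (Fin n) (Fin n) ℝ)) 0 0 Dm
        ∈ m0Set n := by
      refine ⟨A.trace / (n:ℝ), Dm () (), ?_⟩
      refine fromBlocks_inj.mpr ⟨rfl, rfl, rfl, ?_⟩
      ext a b
      cases a; cases b
      simp [Matrix.one_apply]
    have hm1 : fromBlocks (((1:ℝ)/2) • (A - Aᵀ)) 0 0 (0 : Matrix Unit Unit ℝ) ∈ m1Set n := by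
      refine ⟨((1:ℝ)/2) • (A - Aᵀ), ?_, rfl⟩
      rw [transpose_smul, transpose_sub, transpose_transpose]
      module
    have hm2 : fromBlocks (((1:ℝ)/2) • (A + Aᵀ) - (A.trace / (n:ℝ)) • 1) 0 0
        (0 : Matrix Unit Unit ℝ) ∈ m2Set n := by
      refine ⟨((1:ℝ)/2) • (A + Aᵀ) - (A.trace / (n:ℝ)) • 1, ?_, ?_, rfl⟩
      · rw [transpose_sub, transpose_smul, transpose_add, transpose_transpose, transpose_smul,
          transpose_one]
        module
      · rw [trace_sub, trace_smul, trace_add, trace_transpose, trace_smul, trace_one]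
        simp only [smul_eq_mul, Fintype.card_fin]
        field_simp
        ring
    have hm3 : fromBlocks (0 : Matrix (Fin n) (Fin n) ℝ) Bm Cm 0 ∈ m3Set n := by
      refine ⟨fun i => Bm i (), fun j => Cm () j, ?_⟩
      refine fromBlocks_inj.mpr ⟨rfl, ?_, ?_, rfl⟩
      · ext i u; cases u; rfl
      · ext u i; cases u; rfl
    have hsumeq : Z = fromBlocks ((A.trace / (n:ℝ)) • 1) 0 0 Dm
        + fromBlocks (((1:ℝ)/2) • (A - Aᵀ)) 0 0 0
        + fromBlocks (((1:ℝ)/2) • (A + Aᵀ) - (A.trace / (n:ℝ)) • 1) 0 0 0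
        + fromBlocks 0 Bm Cm 0 := by
      rw [fromBlocks_add, fromBlocks_add, fromBlocks_add, hZb]
      exact fromBlocks_inj.mpr ⟨by module, by module, by module, by module⟩
    refine ⟨_, _, _, _, ⟨hZ0, hm0⟩, ⟨hZ1, hm1⟩, ⟨hZ2, hm2⟩, ⟨hZ3, hm3⟩, hsumeq, ?_⟩
    intro W0 W1 W2 W3 hw0 hw1 hw2 hw3 hweq
    exact uniq_decomp hn hw0 hw1 hw2 hw3 hm0 hm1 hm2 hm3 (hweq.symm.trans hsumeq)
  · rintro ⟨Z0, Z1, Z2, Z3, ⟨h0, _⟩, ⟨h1, _⟩, ⟨h2, _⟩, ⟨h3, _⟩, rfl, -⟩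
    exact V.add_mem (V.add_mem (V.add_mem h0 h1) h2) h3
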